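/- Let 𝕜 = (k₁,…,k_m) be an index of positive integers with k₁ ≥ 2 and k_m ≥ 2. Then ∑_{j=0}^{m} (-1)^j ζ(k₁,…,k_j) ζ^⋆(k_m,…,k_{j+1}) = 0, where ζ(∅) = ζ^⋆(∅) = 1. -/

import Mathlib

/-- The multiple zeta value `ζ(k₁,…,k_r)` as a sum over strictly decreasing tuples
`n₁ > ⋯ > n_r ≥ 1` (indices read off as `k (i-1)` for the `i`-th entry). -/
noncomputable def mzv (r : ℕ) (k : ℕ → ℕ) : ℝ :=
  ∑' n : {f : Fin r → ℕ // (∀ a b : Fin r, a < b → f b < f a) ∧ ∀ i, 1 ≤ f i},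
    ∏ i : Fin r, (1 : ℝ) / (n.val i : ℝ) ^ k i.val

/-- The multiple zeta-star value `ζ^⋆(k₁,…,k_r)` as a sum over weakly decreasing tuples
`n₁ ≥ ⋯ ≥ n_r ≥ 1`. -/
noncomputable def mzvStar (r : ℕ) (k : ℕ → ℕ) : ℝ :=
  ∑' n : {f : Fin r → ℕ // (∀ a b : Fin r, a < b → f b ≤ f a) ∧ ∀ i, 1 ≤ f i},
    ∏ i : Fin r, (1 : ℝ) / (n.val i : ℝ) ^ k i.val

set_option maxHeartbeats 1000000

open Finset Set Filter Topology


lemma tail_hasSum (c : ℕ) (hc : 1 ≤ c) :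
    HasSum (fun x : ℕ => Set.indicator {x : ℕ | c ≤ x}
      (fun x : ℕ => (1:ℝ)/x - 1/(x+1)) x) (1/c) := by
  have hinj : Function.Injective (fun y : ℕ => y + c) := add_left_injective c
  have hsupp : ∀ x ∉ Set.range (fun y : ℕ => y + c),
      Set.indicator {x : ℕ | c ≤ x} (fun x : ℕ => (1:ℝ)/x - 1/(x+1)) x = 0 := by
    intro x hx
    apply Set.indicator_of_notMem
    simp only [Set.mem_setOf_eq]
    intro h
    exact hx ⟨x - c, show x - c + c = x by omega⟩
  rw [← Function.Injective.hasSum_iff hinj hsupp]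
  have h1 : ((fun x : ℕ => Set.indicator {x : ℕ | c ≤ x} (fun x : ℕ => (1:ℝ)/x - 1/(x+1)) x)
      ∘ (fun y : ℕ => y + c))
      = fun y : ℕ => ((fun n : ℕ => (1:ℝ)/((n:ℝ)+c)) y - (fun n : ℕ => (1:ℝ)/((n:ℝ)+c)) (y+1)) := by
    funext y
    simp only [Function.comp_apply]
    rw [Set.indicator_of_mem (by simp only [Set.mem_setOf_eq]; omega : (y + c) ∈ {x : ℕ | c ≤ x})]
    push_cast
    ring
  rw [h1]
  have hnn : ∀ y : ℕ, (0:ℝ) ≤ (fun n : ℕ => (1:ℝ)/((n:ℝ)+c)) y - (fun n : ℕ => (1:ℝ)/((n:ℝ)+c)) (y+1) := by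
    intro y
    have h0 : (0:ℝ) < (y:ℝ) + c := by positivity
    have h2 : (1:ℝ)/((y:ℝ)+1+c) ≤ 1/((y:ℝ)+c) := by
      apply one_div_le_one_div_of_le h0; linarith
    show (0:ℝ) ≤ 1/((y:ℝ)+c) - 1/(((y+1:ℕ):ℝ)+c)
    push_cast
    linarith
  rw [hasSum_iff_tendsto_nat_of_nonneg hnn]
  have hps : (fun n : ℕ => ∑ i ∈ Finset.range n,
      ((fun n : ℕ => (1:ℝ)/((n:ℝ)+c)) i - (fun n : ℕ => (1:ℝ)/((n:ℝ)+c)) (i+1)))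
      = fun n : ℕ => 1/(c:ℝ) - 1/((n:ℝ)+c) := by
    funext n
    rw [Finset.sum_range_sub' (fun n : ℕ => (1:ℝ)/((n:ℝ)+c))]
    norm_num
  rw [hps]
  have htt : Tendsto (fun n : ℕ => (1:ℝ)/((n:ℝ)+c)) atTop (𝓝 0) := by
    simp only [one_div]
    exact tendsto_inv_atTop_zero.comp
      (tendsto_atTop_add_const_right _ _ tendsto_natCast_atTop_atTop)
  simpa using (tendsto_const_nhds (x := (1:ℝ)/c)).sub htt

lemma tail_pow_bound (l c : ℕ) (hl : 2 ≤ l) (hc : 1 ≤ c) :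
    Summable (fun x : ℕ => Set.indicator {x : ℕ | c ≤ x} (fun x : ℕ => (1:ℝ)/x^l) x) ∧
    ∑' x : ℕ, Set.indicator {x : ℕ | c ≤ x} (fun x : ℕ => (1:ℝ)/x^l) x ≤ 2/c := by
  set T := fun x : ℕ => Set.indicator {x : ℕ | c ≤ x} (fun x : ℕ => (1:ℝ)/x^l) x with hT
  set D := fun x : ℕ => 2 * Set.indicator {x : ℕ | c ≤ x} (fun x : ℕ => (1:ℝ)/x - 1/(x+1)) x with hD
  have hDsum : HasSum D (2 * (1/c)) := (tail_hasSum c hc).mul_left 2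
  have hle : ∀ x : ℕ, T x ≤ D x := by
    intro x
    simp only [hT, hD]
    by_cases hx : x ∈ {x : ℕ | c ≤ x}
    · rw [Set.indicator_of_mem hx, Set.indicator_of_mem hx]
      have hx1 : (1:ℝ) ≤ (x:ℝ) := by
        have : c ≤ x := hx
        exact_mod_cast le_trans hc this
      have hx0 : (0:ℝ) < x := by linarith
      have h2 : (x:ℝ)^2 ≤ (x:ℝ)^l := pow_le_pow_right₀ hx1 hl
      have hstep : (1:ℝ)/(x:ℝ)^l ≤ 1/(x:ℝ)^2 := by
        apply one_div_le_one_div_of_le (by positivity) h2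
      have hstep2 : (1:ℝ)/(x:ℝ)^2 ≤ 2 * ((1:ℝ)/x - 1/(x+1)) := by
        have he : 2 * ((1:ℝ)/x - 1/(x+1)) = 2 / ((x:ℝ)*(x+1)) := by
          field_simp
          ring
        rw [he, div_le_div_iff₀ (by positivity) (by positivity)]
        nlinarith
      linarith
    · rw [Set.indicator_of_notMem hx, Set.indicator_of_notMem hx]
      norm_num
  have hTnn : ∀ x : ℕ, 0 ≤ T x := by
    intro x
    rw [hT]
    apply Set.indicator_nonneg
    intro x _
    positivity
  have hTsum : Summable T := Summable.of_nonneg_of_le hTnn hle hDsum.summable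
  refine ⟨hTsum, ?_⟩
  calc ∑' x, T x ≤ ∑' x, D x := Summable.tsum_le_tsum hle hTsum hDsum.summable
    _ = 2 * (1/c) := hDsum.tsum_eq
    _ = 2/c := by ring
/-- Weak decreasing condition with entries ≥ 1. -/
def SDec (r : ℕ) (f : Fin r → ℕ) : Prop :=
  (∀ a b : Fin r, a < b → f b ≤ f a) ∧ ∀ i, 1 ≤ f i

/-- The weight `∏ 1/(f i)^(l i)`. -/
noncomputable def swt (r : ℕ) (l : ℕ → ℕ) (f : Fin r → ℕ) : ℝ :=
  ∏ i : Fin r, (1:ℝ)/(f i : ℝ)^(l i.val)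

lemma swt_nonneg (r : ℕ) (l : ℕ → ℕ) (f : Fin r → ℕ) : 0 ≤ swt r l f :=
  Finset.prod_nonneg (fun i _ => by positivity)

/-- head bound -/
def hb {r : ℕ} (g : Fin r → ℕ) : ℕ := (Finset.univ.sup g) ⊔ 1

lemma one_le_hb {r : ℕ} (g : Fin r → ℕ) : 1 ≤ hb g := le_max_right _ _

lemma cons_cond {r : ℕ} (g : Fin r → ℕ) (x : ℕ) :
    SDec (r+1) (Fin.cons x g) ↔ SDec r g ∧ hb g ≤ x := by
  constructor
  · rintro ⟨hp, h1⟩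
    refine ⟨⟨fun a b hab => ?_, fun i => ?_⟩, ?_⟩
    · have := hp a.succ b.succ (by simpa [Fin.succ_lt_succ_iff] using hab)
      simpa using this
    · simpa using h1 i.succ
    · have hx : ∀ i : Fin r, g i ≤ x := by
        intro i
        have := hp 0 i.succ (Fin.succ_pos i)
        simpa using this
      have h1x : 1 ≤ x := by simpa using h1 0
      exact sup_le_iff.mpr ⟨Finset.sup_le (fun i _ => hx i), h1x⟩
  · rintro ⟨⟨hp, h1⟩, hx⟩
    refine ⟨fun a b hab => ?_, fun i => ?_⟩
    · have hb0 : b ≠ 0 := by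
        intro h; rw [h] at hab; exact absurd hab (Fin.not_lt_zero _)
      obtain ⟨b', rfl⟩ := Fin.eq_succ_of_ne_zero hb0
      rcases Fin.eq_zero_or_eq_succ a with ha | ⟨a', rfl⟩
      · subst ha
        simp only [Fin.cons_zero, Fin.cons_succ]
        calc g b' ≤ Finset.univ.sup g := Finset.le_sup (Finset.mem_univ _)
          _ ≤ hb g := le_max_left _ _
          _ ≤ x := hx
      · simp only [Fin.cons_succ]
        exact hp a' b' (by simpa [Fin.succ_lt_succ_iff] using hab)
    · rcases Fin.eq_zero_or_eq_succ i with hi | ⟨i', rfl⟩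
      · subst hi
        simpa using le_trans (one_le_hb g) hx
      · simpa using h1 i'
lemma swt_cons (r : ℕ) (l : ℕ → ℕ) (g : Fin r → ℕ) (x : ℕ) :
    swt (r+1) l (Fin.cons x g) = (1:ℝ)/(x:ℝ)^(l 0) * swt r (fun i => l (i+1)) g := by
  rw [swt, Fin.prod_univ_succ]
  simp only [Fin.cons_zero, Fin.cons_succ, Fin.val_zero, Fin.val_succ]
  rfl

lemma star_summable : ∀ (r : ℕ) (l : ℕ → ℕ), 2 ≤ l 0 → (∀ i, 1 ≤ l i) →
    Summable (fun f : Fin r → ℕ => Set.indicator {f | SDec r f} (swt r l) f) := by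
  intro r
  induction r with
  | zero =>
    intro l _ _
    haveI : Finite (Fin 0 → ℕ) :=
      Finite.of_injective (fun _ => (0 : Fin 1)) (fun a b _ => funext (fun i => i.elim0))
    exact Summable.of_finite
  | succ r IH =>
    intro l h0 h1
    set l' : ℕ → ℕ := fun i => l (i+1) with hl'
    set l'' : ℕ → ℕ := fun i => if i = 0 then l 1 + 1 else l (i+1) with hl''
    set E : (Fin (r+1) → ℕ) ≃ (Fin r → ℕ) × ℕ :=
      { toFun := fun f => (fun i => f i.succ, f 0)
        invFun := fun p => Fin.cons p.2 p.1
        left_inv := fun f => by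
          funext i
          rcases Fin.eq_zero_or_eq_succ i with hi | ⟨i', rfl⟩
          · subst hi; simp
          · simp
        right_inv := fun p => by
          ext <;> simp } with hE
    rw [← Equiv.summable_iff E.symm]
    have hG : ((fun f : Fin (r+1) → ℕ => Set.indicator {f | SDec (r+1) f} (swt (r+1) l) f) ∘ E.symm)
        = fun p : (Fin r → ℕ) × ℕ =>
          (Set.indicator {g | SDec r g} (swt r l') p.1) *
          (Set.indicator {x : ℕ | hb p.1 ≤ x} (fun x : ℕ => (1:ℝ)/(x:ℝ)^(l 0)) p.2) := by
      funext p
      obtain ⟨g, x⟩ := p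
      simp only [Function.comp_apply, hE, Equiv.coe_fn_symm_mk]
      by_cases hc : SDec r g ∧ hb g ≤ x
      · rw [Set.indicator_of_mem (by exact (cons_cond g x).mpr hc : Fin.cons x g ∈ {f | SDec (r+1) f})]
        rw [Set.indicator_of_mem (by exact hc.1), Set.indicator_of_mem (by exact hc.2)]
        rw [swt_cons]
        ring
      · rw [Set.indicator_of_notMem (by
          intro hmem
          exact hc ((cons_cond g x).mp hmem))]
        rcases not_and_or.mp hc with h | h
        · rw [Set.indicator_of_notMem (show g ∉ {g | SDec r g} from h), zero_mul]
        · rw [Set.indicator_of_notMem (show x ∉ {x : ℕ | hb g ≤ x} from h), mul_zero]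
    rw [hG]
    have hnn : ∀ p : (Fin r → ℕ) × ℕ, 0 ≤
        (Set.indicator {g | SDec r g} (swt r l') p.1) *
        (Set.indicator {x : ℕ | hb p.1 ≤ x} (fun x : ℕ => (1:ℝ)/(x:ℝ)^(l 0)) p.2) := by
      intro p
      apply mul_nonneg
      · exact Set.indicator_nonneg (fun g _ => swt_nonneg _ _ _) _
      · exact Set.indicator_nonneg (fun x _ => by positivity) _
    apply (summable_prod_of_nonneg hnn).mpr
    constructor
    · intro g
      show Summable fun y : ℕ => (Set.indicator {g | SDec r g} (swt r l') g) *
        (Set.indicator {x : ℕ | hb g ≤ x} (fun x : ℕ => (1:ℝ)/(x:ℝ)^(l 0)) y)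
      exact ((tail_pow_bound (l 0) (hb g) h0 (one_le_hb g)).1).mul_left _
    · -- outer sum
      have houter : ∀ g : Fin r → ℕ,
          (∑' x : ℕ, (Set.indicator {g | SDec r g} (swt r l') g) *
            (Set.indicator {x : ℕ | hb g ≤ x} (fun x : ℕ => (1:ℝ)/(x:ℝ)^(l 0)) x))
          = (Set.indicator {g | SDec r g} (swt r l') g) *
            ∑' x : ℕ, Set.indicator {x : ℕ | hb g ≤ x} (fun x : ℕ => (1:ℝ)/(x:ℝ)^(l 0)) x := by
        intro g
        exact tsum_mul_left
      have h2'' : 2 ≤ l'' 0 := by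
        have := h1 1
        simp only [hl'', if_pos rfl]
        omega
      have h1'' : ∀ i, 1 ≤ l'' i := by
        intro i
        rcases Nat.eq_zero_or_pos i with hi | hi
        · subst hi
          simp only [hl'', if_pos rfl]
          omega
        · simp only [hl'']
          rw [if_neg (by omega)]
          exact h1 _
      have hIH := IH l'' h2'' h1''
      apply Summable.of_nonneg_of_le
        (f := fun g => 2 * Set.indicator {g | SDec r g} (swt r l'') g)
      · intro g
        apply tsum_nonneg
        intro x
        exact hnn (g, x)
      · intro g
        rw [houter g]
        show _ ≤ 2 * Set.indicator {g | SDec r g} (swt r l'') g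
        by_cases hg : SDec r g
        · rw [Set.indicator_of_mem (by exact hg), Set.indicator_of_mem (by exact hg)]
          have hS := (tail_pow_bound (l 0) (hb g) h0 (one_le_hb g)).2
          have hSnn : 0 ≤ ∑' x : ℕ, Set.indicator {x : ℕ | hb g ≤ x}
              (fun x : ℕ => (1:ℝ)/(x:ℝ)^(l 0)) x :=
            tsum_nonneg (fun x => Set.indicator_nonneg (fun x _ => by positivity) _)
          -- case split on r
          rcases Nat.eq_zero_or_pos r with hr | hr
          · subst hr
            have hw1 : swt 0 l' g = 1 := by rw [swt]; simp
            have hw2 : swt 0 l'' g = 1 := by rw [swt]; simp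
            have hb1 : hb g = 1 := by
              rw [hb]
              simp
            rw [hw1, hw2, hb1]
            rw [hb1] at hS
            norm_num at hS ⊢
            linarith
          · obtain ⟨s, rfl⟩ : ∃ s, r = s + 1 := ⟨r - 1, by omega⟩
            have hg0 : 1 ≤ g 0 := hg.2 0
            have hg0R : (1:ℝ) ≤ (g 0 : ℝ) := by exact_mod_cast hg0
            have hbge : (g 0 : ℝ) ≤ (hb g : ℝ) := by
              exact_mod_cast le_trans (Finset.le_sup (Finset.mem_univ (0 : Fin (s+1)))) (le_max_left _ _)
            have hsplit : swt (s+1) l'' g = (1/(g 0 : ℝ)) * swt (s+1) l' g := by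
              rw [swt, swt, Fin.prod_univ_succ, Fin.prod_univ_succ]
              have he1 : (1:ℝ)/(g 0 : ℝ)^(l'' (0 : Fin (s+1)).val)
                  = (1/(g 0 : ℝ)) * ((1:ℝ)/(g 0 : ℝ)^(l' (0 : Fin (s+1)).val)) := by
                simp only [hl'', hl', Fin.val_zero, if_pos rfl]
                rw [pow_succ]
                field_simp
              have he2 : ∀ i : Fin s, (1:ℝ)/(g i.succ : ℝ)^(l'' (i.succ).val)
                  = (1:ℝ)/(g i.succ : ℝ)^(l' (i.succ).val) := by
                intro i
                simp [hl'', hl', Fin.val_succ]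
              rw [he1, Finset.prod_congr rfl (fun i _ => he2 i)]
              ring
            rw [hsplit]
            have hSle : (∑' x : ℕ, Set.indicator {x : ℕ | hb g ≤ x}
                (fun x : ℕ => (1:ℝ)/(x:ℝ)^(l 0)) x) ≤ 2 / (g 0 : ℝ) := by
              refine le_trans hS ?_
              apply div_le_div_of_nonneg_left (by norm_num) (by linarith) hbge
            calc swt (s+1) l' g * (∑' x : ℕ, Set.indicator {x : ℕ | hb g ≤ x}
                  (fun x : ℕ => (1:ℝ)/(x:ℝ)^(l 0)) x)
                ≤ swt (s+1) l' g * (2 / (g 0 : ℝ)) :=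
                  mul_le_mul_of_nonneg_left hSle (swt_nonneg _ _ _)
              _ = 2 * ((1/(g 0:ℝ)) * swt (s+1) l' g) := by ring
        · rw [Set.indicator_of_notMem (by exact hg), Set.indicator_of_notMem (by exact hg)]
          norm_num
      · exact hIH.mul_left 2
def SLt (r : ℕ) (f : Fin r → ℕ) : Prop :=
  (∀ a b : Fin r, a < b → f b < f a) ∧ ∀ i, 1 ≤ f i

lemma strict_summable (r : ℕ) (l : ℕ → ℕ) (h0 : 2 ≤ l 0) (h1 : ∀ i, 1 ≤ l i) :
    Summable (fun f : Fin r → ℕ => Set.indicator {f | SLt r f} (swt r l) f) := by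
  apply Summable.of_nonneg_of_le
    (f := fun f : Fin r → ℕ => Set.indicator {f | SDec r f} (swt r l) f)
  · intro f; exact Set.indicator_nonneg (fun _ _ => swt_nonneg _ _ _) _
  · intro f
    by_cases hf : SLt r f
    · rw [Set.indicator_of_mem (show f ∈ {f | SLt r f} from hf),
        Set.indicator_of_mem (show f ∈ {f | SDec r f} from
          ⟨fun a b hab => le_of_lt (hf.1 a b hab), hf.2⟩)]
    · rw [Set.indicator_of_notMem (show f ∉ {f | SLt r f} from hf)]
      exact Set.indicator_nonneg (fun _ _ => swt_nonneg _ _ _) _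
  · exact star_summable r l h0 h1

lemma mzv_eq_tsum_indicator (r : ℕ) (k : ℕ → ℕ) :
    mzv r k = ∑' f : Fin r → ℕ, Set.indicator {f | SLt r f} (swt r k) f := by
  rw [← _root_.tsum_subtype]
  rfl

lemma mzvStar_eq_tsum_indicator (r : ℕ) (k : ℕ → ℕ) :
    mzvStar r k = ∑' f : Fin r → ℕ, Set.indicator {f | SDec r f} (swt r k) f := by
  rw [← _root_.tsum_subtype]
  rfl

/-- the combined condition: strictly decreasing on the first `j` entries,
weakly increasing from entry `j` on, all entries ≥ 1. -/
def Cnd (m j : ℕ) (n : Fin m → ℕ) : Prop :=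
  (∀ a b : Fin m, a < b → b.val < j → n b < n a) ∧
  (∀ a b : Fin m, a < b → j ≤ a.val → n a ≤ n b) ∧ (∀ i, 1 ≤ n i)

def glu (m j : ℕ) (hj : j ≤ m) (p : Fin j → ℕ) (q : Fin (m-j) → ℕ) : Fin m → ℕ :=
  fun i => if h : i.val < j then p ⟨i.val, h⟩
    else q ⟨m-1-i.val, by have := i.isLt; omega⟩

def mzvEquiv (m j : ℕ) (hm : 0 < m) (hj : j ≤ m) :
    ({f : Fin j → ℕ // SLt j f} × {g : Fin (m-j) → ℕ // SDec (m-j) g}) ≃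
      {n : Fin m → ℕ // Cnd m j n} where
  toFun z := ⟨glu m j hj z.1.val z.2.val, by
    obtain ⟨⟨p, hp⟩, ⟨q, hq⟩⟩ := z
    refine ⟨fun a b hab hbj => ?_, fun a b hab hja => ?_, fun i => ?_⟩
    · have haj : a.val < j := lt_trans hab hbj
      simp only [glu, dif_pos haj, dif_pos hbj]
      exact hp.1 ⟨a.val, haj⟩ ⟨b.val, hbj⟩ hab
    · have hbj : ¬ (b.val < j) := by have := b.isLt; have : a.val < b.val := hab; omega
      have haj : ¬ (a.val < j) := by omega
      simp only [glu, dif_neg haj, dif_neg hbj]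
      have hlt : (⟨m-1-b.val, by have := b.isLt; omega⟩ : Fin (m-j)) <
          ⟨m-1-a.val, by have := a.isLt; omega⟩ := by
        simp only [Fin.mk_lt_mk]
        have := b.isLt; have : a.val < b.val := hab; omega
      exact hq.1 _ _ hlt
    · by_cases h : i.val < j
      · simp only [glu, dif_pos h]; exact hp.2 _
      · simp only [glu, dif_neg h]; exact hq.2 _⟩
  invFun n :=
    (⟨fun i => n.val ⟨i.val, by have := i.isLt; omega⟩, by
      obtain ⟨nn, h1, h2, h3⟩ := n
      refine ⟨fun a b hab => ?_, fun i => h3 _⟩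
      exact h1 ⟨a.val, by have := a.isLt; omega⟩ ⟨b.val, by have := b.isLt; omega⟩ hab b.isLt⟩,
     ⟨fun i => n.val ⟨m-1-i.val, by have := i.isLt; omega⟩, by
      obtain ⟨nn, h1, h2, h3⟩ := n
      refine ⟨fun a b hab => ?_, fun i => h3 _⟩
      have hab' : a.val < b.val := hab
      have hbv := b.isLt
      exact h2 ⟨m-1-b.val, by omega⟩ ⟨m-1-a.val, by omega⟩
        (by simp only [Fin.mk_lt_mk]; omega) (by simp only; omega)⟩)
  left_inv z := by
    obtain ⟨⟨p, hp⟩, ⟨q, hq⟩⟩ := z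
    refine Prod.ext ?_ ?_
    · apply Subtype.ext
      funext i
      simp only [glu]
      rw [dif_pos i.isLt]
    · apply Subtype.ext
      funext i
      have hiv := i.isLt
      simp only [glu]
      rw [dif_neg (by omega : ¬ (m-1-i.val < j))]
      congr 1
      apply Fin.ext
      simp only
      omega
  right_inv n := by
    apply Subtype.ext
    funext i
    have hiv := i.isLt
    simp only [glu]
    by_cases h : i.val < j
    · rw [dif_pos h]
    · rw [dif_neg h]
      exact congrArg n.val (Fin.ext (show m-1-(m-1-i.val) = i.val by omega))
lemma swt_glu (m j : ℕ) (hm : 0 < m) (hj : j ≤ m) (k : ℕ → ℕ)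
    (p : Fin j → ℕ) (q : Fin (m-j) → ℕ) :
    swt m k (glu m j hj p q) = swt j k p * swt (m-j) (fun i => k (m-1-i)) q := by
  set F : ℕ → ℝ := fun t => if h : t < m then
      (1:ℝ)/((glu m j hj p q ⟨t, h⟩ : ℕ) : ℝ)^(k t) else 1 with hF
  have h1 : swt m k (glu m j hj p q) = ∏ i ∈ Finset.range m, F i := by
    rw [swt, ← Fin.prod_univ_eq_prod_range F m]
    apply Finset.prod_congr rfl
    intro i _
    simp only [hF, dif_pos i.isLt, Fin.eta]
  have h2 : ∏ i ∈ Finset.range m, F i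
      = (∏ i ∈ Finset.range j, F i) * ∏ i ∈ Finset.range (m-j), F (j+i) := by
    rw [← Finset.prod_range_add F j (m-j), show j + (m-j) = m from by omega]
  have h3 : ∏ i ∈ Finset.range j, F i = swt j k p := by
    rw [swt, ← Fin.prod_univ_eq_prod_range F j]
    apply Finset.prod_congr rfl
    intro i _
    have hm' : i.val < m := lt_of_lt_of_le i.isLt hj
    simp only [hF, glu, dif_pos hm', dif_pos i.isLt, Fin.eta]
  have h4 : ∏ i ∈ Finset.range (m-j), F (j+i)
      = swt (m-j) (fun i => k (m-1-i)) q := by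
    have hrefl : ∏ i ∈ Finset.range (m-j), F (j+i)
        = ∏ i ∈ Finset.range (m-j), F (m-1-i) := by
      rw [← Finset.prod_range_reflect (fun i => F (j+i)) (m-j)]
      apply Finset.prod_congr rfl
      intro i hi
      have : i < m - j := Finset.mem_range.mp hi
      congr 1
      omega
    rw [hrefl, swt, ← Fin.prod_univ_eq_prod_range (fun t => F (m-1-t)) (m-j)]
    apply Finset.prod_congr rfl
    intro i _
    have hi' : i.val < m - j := i.isLt
    have hv : m-1-i.val < m := by omega
    have hnj : ¬ ((⟨m-1-i.val, hv⟩ : Fin m).val < j) := by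
      simp only
      omega
    simp only [hF, dif_pos hv, glu, dif_neg hnj]
    simp only [Nat.sub_sub_self (show (i:ℕ) ≤ m-1 from by omega), Fin.eta]
  rw [h1, h2, h3, h4]

lemma cnd_main (m j : ℕ) (hm : 0 < m) (hj : j ≤ m) (k : ℕ → ℕ)
    (hk : ∀ i < m, 0 < k i) (h1 : 2 ≤ k 0) (h2 : 2 ≤ k (m-1)) :
    Summable (fun n : Fin m → ℕ => Set.indicator {n | Cnd m j n} (swt m k) n) ∧
    mzv j k * mzvStar (m-j) (fun i => k (m-1-i)) =
      ∑' n : Fin m → ℕ, Set.indicator {n | Cnd m j n} (swt m k) n := by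
  set l₁ : ℕ → ℕ := fun i => if i < m then k i else 2 with hl₁
  have hswt : swt j l₁ = swt j k := by
    funext f
    rw [swt, swt]
    apply Finset.prod_congr rfl
    intro i _
    have him : i.val < m := lt_of_lt_of_le i.isLt hj
    simp [hl₁, him]
  have hsum1 : Summable (fun f : Fin j → ℕ => Set.indicator {f | SLt j f} (swt j k) f) := by
    have hs := strict_summable j l₁
      (by simp only [hl₁, if_pos hm]; exact h1)
      (by
        intro i
        by_cases him : i < m
        · simp only [hl₁, if_pos him]; exact hk i him
        · simp only [hl₁, if_neg him]; omega)
    rw [hswt] at hs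
    exact hs
  have hsum2 : Summable (fun g : Fin (m-j) → ℕ =>
      Set.indicator {g | SDec (m-j) g} (swt (m-j) (fun i => k (m-1-i))) g) := by
    apply star_summable (m-j) (fun i => k (m-1-i))
    · simpa using h2
    · intro i
      exact hk (m-1-i) (by omega)
  have hs1 : Summable (fun x : {f : Fin j → ℕ // SLt j f} => swt j k x.val) :=
    (summable_subtype_iff_indicator (s := {f : Fin j → ℕ | SLt j f}) (f := swt j k)).mpr hsum1
  have hs2 : Summable (fun x : {g : Fin (m-j) → ℕ // SDec (m-j) g} =>
      swt (m-j) (fun i => k (m-1-i)) x.val) :=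
    (summable_subtype_iff_indicator (s := {g : Fin (m-j) → ℕ | SDec (m-j) g})
      (f := swt (m-j) (fun i => k (m-1-i)))).mpr hsum2
  have hn1 : Summable (fun x : {f : Fin j → ℕ // SLt j f} => ‖swt j k x.val‖) :=
    hs1.congr (fun b => (Real.norm_of_nonneg (swt_nonneg _ _ _)).symm)
  have hn2 : Summable (fun x : {g : Fin (m-j) → ℕ // SDec (m-j) g} =>
      ‖swt (m-j) (fun i => k (m-1-i)) x.val‖) :=
    hs2.congr (fun b => (Real.norm_of_nonneg (swt_nonneg _ _ _)).symm)
  have hprod : Summable (fun z : {f : Fin j → ℕ // SLt j f} × {g : Fin (m-j) → ℕ // SDec (m-j) g} =>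
      swt j k z.1.val * swt (m-j) (fun i => k (m-1-i)) z.2.val) :=
    Summable.mul_of_nonneg
      (f := fun x : {f : Fin j → ℕ // SLt j f} => swt j k x.val)
      (g := fun x : {g : Fin (m-j) → ℕ // SDec (m-j) g} => swt (m-j) (fun i => k (m-1-i)) x.val)
      hs1 hs2 (fun x => swt_nonneg _ _ _) (fun x => swt_nonneg _ _ _)
  have hcomp : ((fun n : {n : Fin m → ℕ // Cnd m j n} => swt m k n.val) ∘ (mzvEquiv m j hm hj))
      = (fun z : {f : Fin j → ℕ // SLt j f} × {g : Fin (m-j) → ℕ // SDec (m-j) g} =>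
        swt j k z.1.val * swt (m-j) (fun i => k (m-1-i)) z.2.val) := by
    funext z
    exact swt_glu m j hm hj k z.1.val z.2.val
  have hsubCnd : Summable (fun n : {n : Fin m → ℕ // Cnd m j n} => swt m k n.val) := by
    rw [← Equiv.summable_iff (mzvEquiv m j hm hj)]
    rw [hcomp]
    exact hprod
  have hindCnd : Summable (fun n : Fin m → ℕ => Set.indicator {n | Cnd m j n} (swt m k) n) :=
    (summable_subtype_iff_indicator (s := {n : Fin m → ℕ | Cnd m j n}) (f := swt m k)).mp hsubCnd
  refine ⟨hindCnd, ?_⟩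
  have e1 : mzv j k = ∑' x : {f : Fin j → ℕ // SLt j f}, swt j k x.val := rfl
  have e2 : mzvStar (m-j) (fun i => k (m-1-i))
      = ∑' x : {g : Fin (m-j) → ℕ // SDec (m-j) g}, swt (m-j) (fun i => k (m-1-i)) x.val := rfl
  rw [e1, e2, tsum_mul_tsum_of_summable_norm
    (f := fun x : {f : Fin j → ℕ // SLt j f} => swt j k x.val)
    (g := fun x : {g : Fin (m-j) → ℕ // SDec (m-j) g} => swt (m-j) (fun i => k (m-1-i)) x.val)
    hn1 hn2]
  have e3 : ∑' (z : {f : Fin j → ℕ // SLt j f} × {g : Fin (m-j) → ℕ // SDec (m-j) g}),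
      swt j k z.1.val * swt (m-j) (fun i => k (m-1-i)) z.2.val
      = ∑' n : {n : Fin m → ℕ // Cnd m j n}, swt m k n.val := by
    rw [← Equiv.tsum_eq (mzvEquiv m j hm hj) (fun n => swt m k n.val)]
    apply tsum_congr
    intro z
    exact (swt_glu m j hm hj k z.1.val z.2.val).symm
  rw [e3, ← _root_.tsum_subtype {n : Fin m → ℕ | Cnd m j n} (swt m k)]
  rfl
lemma signed_sum_zero (m : ℕ) (hm : 0 < m) (F : (Fin m → ℕ) → ℝ) (n : Fin m → ℕ) :
    ∑ j ∈ Finset.range (m+1), (-1:ℝ)^j * Set.indicator {n | Cnd m j n} F n = 0 := by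
  classical
  set N : ℕ → ℕ := fun t => if h : t < m then n ⟨t, h⟩ else 0 with hN
  have hNd : ∀ (t : ℕ) (ht : t < m), N t = n ⟨t, ht⟩ := by
    intro t ht; rw [hN]; simp only [dif_pos ht]
  set cnd : ℕ → Prop := fun j => j < m ∧ (j = 0 ∨ N j < N (j-1)) with hcnddef
  -- key fact 1 : valid j satisfying cnd can be pushed up
  have key1 : ∀ j, j ≤ m → Cnd m j n → cnd j →
      (Cnd m (j+1) n ∧ ¬ cnd (j+1)) := by
    intro j hjm hC hcnd
    obtain ⟨hjlt, hdisj⟩ := hcnd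
    constructor
    · refine ⟨fun a b hab hbj1 => ?_, fun a b hab hja => hC.2.1 a b hab (by omega), hC.2.2⟩
      rcases Nat.lt_or_ge b.val j with hbj | hbj
      · exact hC.1 a b hab hbj
      · -- b.val = j
        have hbv : b.val = j := by omega
        have hj1 : 1 ≤ j := by
          rcases hdisj with h0 | hlt
          · exfalso; have : a.val < b.val := hab; omega
          · by_contra h
            have hj0 : j = 0 := by omega
            rw [hj0] at hlt
            simp at hlt
        have hjlt' : N j < N (j-1) := by
          rcases hdisj with h0 | hlt
          · omega
          · exact hlt
        have hj1m : j - 1 < m := by omega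
        have hnb : n b = N j := by
          rw [hNd j hjlt]
          exact congrArg n (Fin.ext (by simp only; omega))
        have hav : a.val < j := by have : a.val < b.val := hab; omega
        rcases Nat.lt_or_ge a.val (j-1) with haj | haj
        · have hstep : n ⟨j-1, hj1m⟩ < n a :=
            hC.1 a ⟨j-1, hj1m⟩ (by simp only [Fin.lt_def]; omega) (by simp only; omega)
          have : N (j-1) = n ⟨j-1, hj1m⟩ := hNd (j-1) hj1m
          omega
        · have hav' : a.val = j - 1 := by omega
          have hna : n a = N (j-1) := by
            rw [hNd (j-1) hj1m]
            exact congrArg n (Fin.ext (by simp only; omega))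
          omega
    · rintro ⟨h1m, h2⟩
      rcases h2 with h0 | hlt
      · omega
      · have : n ⟨j, hjlt⟩ ≤ n ⟨j+1, h1m⟩ :=
          hC.2.1 ⟨j, hjlt⟩ ⟨j+1, h1m⟩ (by simp only [Fin.lt_def]; omega) (by simp only; omega)
        have hss : j + 1 - 1 = j := by omega
        rw [hss, hNd j hjlt, hNd (j+1) h1m] at hlt
        omega
  -- key fact 2 : valid j not satisfying cnd can be pushed down
  have key2 : ∀ j, j ≤ m → Cnd m j n → ¬ cnd j →
      (1 ≤ j ∧ Cnd m (j-1) n ∧ cnd (j-1)) := by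
    intro j hjm hC hncnd
    have hj1 : 1 ≤ j := by
      by_contra h
      have hj0 : j = 0 := by omega
      apply hncnd
      rw [hcnddef, hj0]
      exact ⟨hm, Or.inl rfl⟩
    have hj1m : j - 1 < m := by omega
    have hkey : j < m → N (j-1) ≤ N j := by
      intro hjm'
      simp only [hcnddef] at hncnd
      push_neg at hncnd
      have := (hncnd hjm').2
      omega
    refine ⟨hj1, ⟨fun a b hab hbj => hC.1 a b hab (by omega),
        fun a b hab hja => ?_, hC.2.2⟩, ?_⟩
    · -- weak part for j-1
      rcases Nat.lt_or_ge a.val j with haj | haj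
      · -- a.val = j-1
        have hav : a.val = j - 1 := by omega
        have hbv : j ≤ b.val := by have : a.val < b.val := hab; omega
        have hjm' : j < m := by have := b.isLt; omega
        have hna : n a = N (j-1) := by
          rw [hNd (j-1) hj1m]
          exact congrArg n (Fin.ext (by simp only; omega))
        have hle1 : N (j-1) ≤ N j := hkey hjm'
        rcases Nat.lt_or_ge j b.val with hjb | hjb
        · have : n ⟨j, hjm'⟩ ≤ n b :=
            hC.2.1 ⟨j, hjm'⟩ b (by simp only [Fin.lt_def]; omega) (by simp only; omega)
          rw [hNd j hjm'] at hle1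
          omega
        · have hbv' : b.val = j := by omega
          have hnb : n b = N j := by
            rw [hNd j hjm']
            exact congrArg n (Fin.ext (by simp only; omega))
          omega
      · exact hC.2.1 a b hab haj
    · -- cnd (j-1)
      rw [hcnddef]
      refine ⟨by omega, ?_⟩
      rcases Nat.eq_or_lt_of_le hj1 with hj1' | hj2
      · exact Or.inl (by omega)
      · right
        have h2m : j - 2 < m := by omega
        have := hC.1 ⟨j-2, h2m⟩ ⟨j-1, hj1m⟩ (by simp only [Fin.lt_def]; omega)
          (by simp only; omega)
        have hs' : j - 1 - 1 = j - 2 := by omega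
        rw [hs', hNd (j-1) hj1m, hNd (j-2) h2m]
        exact this
  -- rewrite as a sum over the filtered set
  have hre : ∀ j, (-1:ℝ)^j * Set.indicator {n | Cnd m j n} F n
      = if Cnd m j n then (-1:ℝ)^j * F n else 0 := by
    intro j
    by_cases h : Cnd m j n
    · rw [Set.indicator_of_mem (show n ∈ {n | Cnd m j n} from h) F, if_pos h]
    · rw [Set.indicator_of_notMem (show n ∉ {n | Cnd m j n} from h) F, if_neg h, mul_zero]
  rw [Finset.sum_congr rfl (fun j _ => hre j), ← Finset.sum_filter]
  -- apply the involution
  set s : Finset ℕ := (Finset.range (m+1)).filter (fun j => Cnd m j n) with hs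
  have hmem : ∀ j, j ∈ s ↔ (j < m + 1 ∧ Cnd m j n) := by
    intro j
    rw [hs, Finset.mem_filter, Finset.mem_range]
  apply Finset.sum_involution
    (g := fun j _ => if cnd j then j + 1 else j - 1)
  · -- f a + f (g a) = 0
    intro j hj
    by_cases h : cnd j
    · rw [if_pos h, pow_succ]
      ring
    · rw [if_neg h]
      have hjs := (hmem j).mp hj
      obtain ⟨hj1, _, _⟩ := key2 j (by omega) hjs.2 h
      have h2 : (-1:ℝ)^j = (-1)^(j-1) * (-1) := by
        rw [← pow_succ]
        congr 1
        omega
      rw [h2]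
      ring
  · -- g a ≠ a
    intro j hj _
    by_cases h : cnd j
    · rw [if_pos h]; omega
    · rw [if_neg h]
      have hjs := (hmem j).mp hj
      obtain ⟨hj1, _, _⟩ := key2 j (by omega) hjs.2 h
      omega
  · -- g a ∈ s
    intro j hj
    have hjs := (hmem j).mp hj
    by_cases h : cnd j
    · rw [if_pos h]
      obtain ⟨hC', _⟩ := key1 j (by omega) hjs.2 h
      exact (hmem _).mpr ⟨by have := h.1; omega, hC'⟩
    · rw [if_neg h]
      obtain ⟨hj1, hC', _⟩ := key2 j (by omega) hjs.2 h
      exact (hmem _).mpr ⟨by omega, hC'⟩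
  · -- involution
    intro j hj
    have hjs := (hmem j).mp hj
    by_cases h : cnd j
    · rw [if_pos h]
      obtain ⟨_, hnot⟩ := key1 j (by omega) hjs.2 h
      rw [if_neg hnot]
      omega
    · rw [if_neg h]
      obtain ⟨hj1, _, hcnd'⟩ := key2 j (by omega) hjs.2 h
      rw [if_pos hcnd']
      omega

/-- For an index `𝕜 = (k₁,…,k_m)` with `k₁ ≥ 2` and `k_m ≥ 2`:
`∑_{j=0}^{m} (-1)^j ζ(k₁,…,k_j) ζ^⋆(k_m,…,k_{j+1}) = 0` (with `ζ(∅)=ζ^⋆(∅)=1`). -/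
theorem mzv_antipode (m : ℕ) (hm : 0 < m) (k : ℕ → ℕ) (hk : ∀ i < m, 0 < k i)
    (h1 : 2 ≤ k 0) (h2 : 2 ≤ k (m - 1)) :
    ∑ j ∈ Finset.range (m + 1),
        (-1 : ℝ) ^ j * mzv j k * mzvStar (m - j) (fun i => k (m - 1 - i)) = 0 := by
  have hsums : ∀ j ∈ Finset.range (m+1),
      Summable (fun n : Fin m → ℕ => Set.indicator {n | Cnd m j n} (swt m k) n) ∧
      mzv j k * mzvStar (m-j) (fun i => k (m-1-i)) =
        ∑' n : Fin m → ℕ, Set.indicator {n | Cnd m j n} (swt m k) n := by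
    intro j hj
    exact cnd_main m j hm (Nat.lt_succ_iff.mp (Finset.mem_range.mp hj)) k hk h1 h2
  have step1 : ∑ j ∈ Finset.range (m + 1),
      (-1 : ℝ) ^ j * mzv j k * mzvStar (m - j) (fun i => k (m - 1 - i))
      = ∑ j ∈ Finset.range (m+1), ∑' n : Fin m → ℕ,
          (-1:ℝ)^j * Set.indicator {n | Cnd m j n} (swt m k) n := by
    apply Finset.sum_congr rfl
    intro j hj
    rw [mul_assoc, (hsums j hj).2, ← tsum_mul_left]
  rw [step1, ← Summable.tsum_finsetSum (fun j hj => ((hsums j hj).1).mul_left _)]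
  have hptwise : ∀ n : Fin m → ℕ, ∑ j ∈ Finset.range (m+1),
      (-1:ℝ)^j * Set.indicator {n | Cnd m j n} (swt m k) n = 0 :=
    fun n => signed_sum_zero m hm (swt m k) n
  rw [tsum_congr hptwise, tsum_zero]
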